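/- With the malicious-agent setup, for every fixed λ ∈ (0,1) the function d ↦ e(λ, d) is strictly increasing on [0, ∞); equivalently, the slope tr(L₁₂(λ)ᵀ·L₁₂(λ)) of e(λ, ·) (which is affine in d) is strictly positive for all λ ∈ (0,1). That is, larger outlier-noise variance yields strictly larger expected consensus error. -/

import Mathlib

open Matrix

attribute [local instance] Matrix.linftyOpNormedRing Matrix.linftyOpNormedAlgebra

section Aux

variable {R M : ℕ}

/-- Entry evaluation is bounded by the `L∞` operator norm. -/
lemma matrix_entry_norm_le {n : Type*} [Fintype n] [DecidableEq n]
    (A : Matrix n n ℝ) (i j : n) : ‖A i j‖ ≤ ‖A‖ := by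
  have h1 : ‖A i j‖₊ ≤ ∑ k, ‖A i k‖₊ :=
    Finset.single_le_sum (f := fun k => ‖A i k‖₊) (fun _ _ => zero_le) (Finset.mem_univ j)
  have h2 : (∑ k, ‖A i k‖₊) ≤ ‖A‖₊ := by
    rw [Matrix.linfty_opNNNorm_def]
    exact Finset.le_sup (f := fun i => ∑ k, ‖A i k‖₊) (Finset.mem_univ i)
  exact_mod_cast h1.trans h2

end Aux

/-- In the malicious-agent setup, for every fixed `λ ∈ (0,1)` the
function `d ↦ e(λ, d)` is strictly increasing on `[0, ∞)`; equivalently its slope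
`tr(L₁₂(λ)ᵀ·L₁₂(λ))` is strictly positive: larger outlier-noise variance yields
strictly larger expected consensus error. -/
theorem error_strictly_increasing_in_d
    (R M : ℕ) (hR : 2 ≤ R) (hM : 1 ≤ M)
    (W0 : Matrix (Fin R ⊕ Fin M) (Fin R ⊕ Fin M) ℝ)
    (hW0symm : W0.IsSymm)
    (hW0nonneg : ∀ i j, 0 ≤ W0 i j)
    (hW0row : ∀ i, ∑ j, W0 i j = 1)
    (hW0diag : ∀ i, W0 i i = 0)
    (hW0irr : ∀ i j, ∃ k : ℕ, 0 < (W0 ^ k) i j)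
    (W : Matrix (Fin R ⊕ Fin M) (Fin R ⊕ Fin M) ℝ)
    (hW : W = Matrix.fromBlocks W0.toBlocks₁₁ W0.toBlocks₁₂ 0 1)
    (hW12 : W0.toBlocks₁₂ ≠ 0)
    (L : ℝ → Matrix (Fin R ⊕ Fin M) (Fin R ⊕ Fin M) ℝ)
    (hL : ∀ lam : ℝ, L lam = lam • (1 - (1 - lam) • W)⁻¹)
    (S : Matrix (Fin R) (Fin R ⊕ Fin M) ℝ)
    (hS : S = Matrix.of fun i j => if j = Sum.inl i then 1 else 0)
    (CR : Matrix (Fin R) (Fin R) ℝ)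
    (hCR : CR = Matrix.of fun _ _ => (R : ℝ)⁻¹)
    (V : Matrix (Fin R ⊕ Fin M) (Fin R ⊕ Fin M) ℝ)
    (hV : V = Matrix.fromBlocks 0 0 0 1)
    (E : ℝ → Matrix (Fin R) (Fin R ⊕ Fin M) ℝ)
    (hE : ∀ lam : ℝ, E lam = S * L lam - CR * S)
    (e : ℝ → ℝ → ℝ)
    (he : ∀ (lam d : ℝ), e lam d = ((1 + d • V) * (E lam)ᵀ * E lam).trace)
    (lam : ℝ) (hlam : lam ∈ Set.Ioo (0 : ℝ) 1) :
    StrictMonoOn (fun d => e lam d) (Set.Ici 0)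
    ∧ 0 < ((L lam).toBlocks₁₂ᵀ * (L lam).toBlocks₁₂).trace := by
  obtain ⟨hl0, hl1⟩ := hlam
  -- W has nonnegative entries
  have hWnn : ∀ i j, 0 ≤ W i j := by
    rintro (i | i) (j | j) <;>
      simp only [hW, Matrix.fromBlocks_apply₁₁, Matrix.fromBlocks_apply₁₂,
        Matrix.fromBlocks_apply₂₁, Matrix.fromBlocks_apply₂₂, Matrix.zero_apply,
        Matrix.one_apply, Matrix.toBlocks₁₁, Matrix.toBlocks₁₂, Matrix.of_apply]
    · exact hW0nonneg _ _
    · exact hW0nonneg _ _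
    · exact le_refl 0
    · split <;> norm_num
  -- W is row-stochastic
  have hWrow : ∀ i, ∑ j, W i j = 1 := by
    rintro (i | i)
    · have h := hW0row (Sum.inl i)
      rw [Fintype.sum_sum_type] at h ⊢
      simp only [hW, Matrix.fromBlocks_apply₁₁, Matrix.fromBlocks_apply₁₂,
        Matrix.toBlocks₁₁, Matrix.toBlocks₁₂, Matrix.of_apply]
      exact h
    · rw [Fintype.sum_sum_type]
      simp [hW, Matrix.one_apply]
  set B : Matrix (Fin R ⊕ Fin M) (Fin R ⊕ Fin M) ℝ := (1 - lam) • W with hBdef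
  have hBnn : ∀ i j, 0 ≤ B i j := by
    intro i j
    have : B i j = (1 - lam) * W i j := rfl
    rw [this]
    exact mul_nonneg (by linarith) (hWnn i j)
  have hpownn : ∀ (n : ℕ) i j, 0 ≤ (B ^ n) i j := by
    intro n
    induction n with
    | zero =>
      intro i j
      simp only [pow_zero, Matrix.one_apply]
      split <;> norm_num
    | succ n ih =>
      intro i j
      rw [pow_succ, Matrix.mul_apply]
      exact Finset.sum_nonneg fun k _ => mul_nonneg (ih i k) (hBnn k j)
  -- norm bounds
  have hWnorm : ‖W‖ ≤ 1 := by
    have : ‖W‖₊ ≤ 1 := by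
      rw [Matrix.linfty_opNNNorm_def]
      refine Finset.sup_le fun i _ => ?_
      have hcoe : ((∑ j, ‖W i j‖₊ : NNReal) : ℝ) = 1 := by
        push_cast
        rw [← hWrow i]
        exact Finset.sum_congr rfl fun j _ => Real.norm_of_nonneg (hWnn i j)
      have := hcoe.le
      exact_mod_cast this
    exact_mod_cast this
  have hBnorm : ‖B‖ < 1 := by
    rw [hBdef, norm_smul]
    have h1 : ‖(1 - lam)‖ = 1 - lam := Real.norm_of_nonneg (by linarith)
    rw [h1]
    have hWn0 : 0 ≤ ‖W‖ := norm_nonneg _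
    nlinarith
  have hsum : Summable fun n : ℕ => B ^ n := summable_geometric_of_norm_lt_one hBnorm
  have htsum : (∑' n : ℕ, B ^ n) = (1 - B)⁻¹ := by
    rw [Matrix.nonsing_inv_eq_ringInverse]
    exact geom_series_eq_inverse B hBnorm
  -- entrywise sum representation of the inverse
  have hent : ∀ i j, HasSum (fun n : ℕ => (B ^ n) i j) ((1 - B)⁻¹ i j) := by
    intro i j
    let ψ : Matrix (Fin R ⊕ Fin M) (Fin R ⊕ Fin M) ℝ →ₗ[ℝ] ℝ :=
      { toFun := fun A => A i j
        map_add' := fun _ _ => rfl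
        map_smul' := fun _ _ => rfl }
    let φ : Matrix (Fin R ⊕ Fin M) (Fin R ⊕ Fin M) ℝ →L[ℝ] ℝ :=
      ψ.mkContinuous 1 (fun A => by
        show ‖A i j‖ ≤ 1 * ‖A‖
        simpa using matrix_entry_norm_le A i j)
    have h := hsum.hasSum.mapL φ
    rw [htsum] at h
    exact h
  -- choose a positive entry of W0.toBlocks₁₂
  obtain ⟨i0, m0, hpos0⟩ : ∃ i0 m0, 0 < W0.toBlocks₁₂ i0 m0 := by
    by_contra hcon
    push_neg at hcon
    apply hW12
    ext i m
    have h1 : 0 ≤ W0.toBlocks₁₂ i m := hW0nonneg (Sum.inl i) (Sum.inr m)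
    have h2 := hcon i m
    simp [le_antisymm h2 h1]
  have hWpos : 0 < W (Sum.inl i0) (Sum.inr m0) := by
    rw [hW]; simpa using hpos0
  -- positivity of the corresponding entry of L lam
  have hBentry : 0 < B (Sum.inl i0) (Sum.inr m0) := by
    have : B (Sum.inl i0) (Sum.inr m0) = (1 - lam) * W (Sum.inl i0) (Sum.inr m0) := rfl
    rw [this]
    exact mul_pos (by linarith) hWpos
  have hinv_pos : 0 < (1 - B)⁻¹ (Sum.inl i0) (Sum.inr m0) := by
    have hle : (B ^ 1) (Sum.inl i0) (Sum.inr m0) ≤ (1 - B)⁻¹ (Sum.inl i0) (Sum.inr m0) :=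
      le_hasSum (hent _ _) 1 (fun n _ => hpownn n _ _)
    rw [pow_one] at hle
    linarith
  have hLpos : 0 < L lam (Sum.inl i0) (Sum.inr m0) := by
    rw [hL]
    have : (lam • (1 - (1 - lam) • W)⁻¹) (Sum.inl i0) (Sum.inr m0)
        = lam * (1 - B)⁻¹ (Sum.inl i0) (Sum.inr m0) := rfl
    rw [this]
    exact mul_pos hl0 hinv_pos
  -- the malicious columns of E lam are exactly L₁₂
  have hEentry : ∀ (i : Fin R) (m : Fin M),
      E lam i (Sum.inr m) = L lam (Sum.inl i) (Sum.inr m) := by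
    intro i m
    rw [hE]
    have h1 : (S * L lam) i (Sum.inr m) = L lam (Sum.inl i) (Sum.inr m) := by
      rw [Matrix.mul_apply, hS]
      simp [ite_mul]
    have h2 : (CR * S) i (Sum.inr m) = 0 := by
      rw [Matrix.mul_apply, hS]
      simp
    simp [Matrix.sub_apply, h1, h2]
  set slope : ℝ := ((L lam).toBlocks₁₂ᵀ * (L lam).toBlocks₁₂).trace with hslopedef
  have hslope_eq : slope = ∑ m : Fin M, ∑ i : Fin R,
      (L lam (Sum.inl i) (Sum.inr m)) ^ 2 := by
    rw [hslopedef]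
    simp [Matrix.trace, Matrix.diag, Matrix.mul_apply, Matrix.transpose_apply,
      Matrix.toBlocks₁₂, sq]
  have hslope_pos : 0 < slope := by
    rw [hslope_eq]
    refine Finset.sum_pos' (fun m _ => Finset.sum_nonneg fun i _ => sq_nonneg _)
      ⟨m0, Finset.mem_univ _, ?_⟩
    exact Finset.sum_pos' (fun i _ => sq_nonneg _)
      ⟨i0, Finset.mem_univ _, by positivity⟩
  -- the trace of V·Eᵀ·E is the slope
  have hVtr : (V * ((E lam)ᵀ * E lam)).trace = slope := by
    rw [hslope_eq, hV]
    simp only [Matrix.trace, Matrix.diag, Matrix.mul_apply, Fintype.sum_sum_type,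
      Matrix.fromBlocks_apply₁₁, Matrix.fromBlocks_apply₁₂, Matrix.fromBlocks_apply₂₁,
      Matrix.fromBlocks_apply₂₂, Matrix.zero_apply, Matrix.one_apply, zero_mul,
      Finset.sum_const_zero, ite_mul, one_mul, Finset.sum_ite_eq, Finset.mem_univ,
      if_true, zero_add, add_zero, Matrix.transpose_apply]
    refine Finset.sum_congr rfl fun m _ => Finset.sum_congr rfl fun i _ => ?_
    rw [hEentry i m, sq]
  -- affine formula for e
  set c : ℝ := ((E lam)ᵀ * E lam).trace with hcdef
  have hkey : ∀ d : ℝ, e lam d = c + d * slope := by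
    intro d
    rw [he]
    have hexp : (1 + d • V) * (E lam)ᵀ * E lam
        = (E lam)ᵀ * E lam + d • (V * ((E lam)ᵀ * E lam)) := by
      rw [Matrix.add_mul, Matrix.one_mul, Matrix.add_mul, Matrix.smul_mul, Matrix.smul_mul, Matrix.mul_assoc]
    rw [hexp, Matrix.trace_add, Matrix.trace_smul, hVtr, hcdef, smul_eq_mul]
  constructor
  · intro a _ b _ hab
    simp only [hkey]
    nlinarith
  · exact hslope_pos
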